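/- There exist infinitely many pairs of SP numbers that are consecutive natural numbers; that is, the set of natural numbers n such that both n and n + 1 are SP numbers is infinite. -/
import Mathlib


/-- A natural number is an SP number if it equals `p * a ^ 2` for a prime `p`
and a natural number `a ≥ 2`. -/
def IsSP (n : ℕ) : Prop := ∃ p a : ℕ, p.Prime ∧ 2 ≤ a ∧ n = p * a ^ 2

/-- Pell-type sequence: solutions of 3 y² = 2 x² + 1. -/
def spSeq : ℕ → ℕ × ℕ
  | 0 => (11, 9)
  | k + 1 => (5 * (spSeq k).1 + 6 * (spSeq k).2, 4 * (spSeq k).1 + 5 * (spSeq k).2)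

lemma spSeq_inv (k : ℕ) : 3 * (spSeq k).2 ^ 2 = 2 * (spSeq k).1 ^ 2 + 1 := by
  induction k with
  | zero => rfl
  | succ k ih =>
    simp only [spSeq]
    nlinarith [ih]

lemma spSeq_ge (k : ℕ) : 2 ≤ (spSeq k).1 ∧ 2 ≤ (spSeq k).2 := by
  induction k with
  | zero => refine ⟨?_, ?_⟩ <;> simp [spSeq]
  | succ k ih =>
    simp only [spSeq]
    omega

lemma spSeq_mono : StrictMono fun k => (spSeq k).1 := by
  apply strictMono_nat_of_lt_succ
  intro k
  have h := spSeq_ge k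
  simp only [spSeq]
  omega

/-- There are infinitely many SP twins: pairs of consecutive natural numbers
that are both SP numbers. -/
theorem infinite_SP_twins : {n : ℕ | IsSP n ∧ IsSP (n + 1)}.Infinite := by
  apply Set.infinite_of_injective_forall_mem
    (f := fun k : ℕ => 2 * (spSeq k).1 ^ 2)
  · intro a b hab
    have : (spSeq a).1 = (spSeq b).1 := by
      have ha := (spSeq_ge a).1
      have hb := (spSeq_ge b).1
      nlinarith [sq_nonneg ((spSeq a).1 - (spSeq b).1)]
    exact spSeq_mono.injective this
  · intro k
    constructor
    · exact ⟨2, (spSeq k).1, Nat.prime_two, (spSeq_ge k).1, rfl⟩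
    · exact ⟨3, (spSeq k).2, Nat.prime_three, (spSeq_ge k).2, (spSeq_inv k).symm⟩
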